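/- Let N be a group with a separating filter base 𝒰 of normal subgroups, endowed with the subgroup topology, and let N̄ be its Hausdorff completion. Then N̄ is locally compact if and only if there exists U ∈ 𝒰 such that |U/V| < ∞ for all V ∈ 𝒰 with V ⊆ U. -/

import Mathlib

instance quotDiscrete {N : Type*} [Group N] (U : Subgroup N) :
    TopologicalSpace (N ⧸ U) := ⊥

private lemma exists_lb {N ι : Type*} [Group N] [Nonempty ι] (U : ι → Subgroup N)
    (hdir : ∀ i j : ι, ∃ k, U k ≤ U i ⊓ U j) (F : Set ι) (hF : F.Finite) :
    ∃ i, ∀ t ∈ F, U i ≤ U t := by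
  refine Set.Finite.induction_on (motive := fun F _ => ∃ i, ∀ t ∈ F, U i ≤ U t) F hF ⟨Classical.arbitrary ι, by simp⟩ ?_
  intro a F _ _ ih
  obtain ⟨i, hi⟩ := ih
  obtain ⟨k, hk⟩ := hdir a i
  refine ⟨k, fun t ht => ?_⟩
  rcases Set.mem_insert_iff.1 ht with h | h
  · exact h ▸ hk.trans inf_le_left
  · exact (hk.trans inf_le_right).trans (hi t h)

theorem stmt_3 {N ι : Type*} [Group N] [Nonempty ι] (U : ι → Subgroup N)
    [∀ i, (U i).Normal]
    (hdir : ∀ i j : ι, ∃ k, U k ≤ U i ⊓ U j)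
    (hsep : (⨅ i, U i) = ⊥) :
    let φ : N →* (∀ i, N ⧸ U i) := Pi.monoidHom fun i => QuotientGroup.mk' (U i)
    (LocallyCompactSpace ↥(closure (Set.range φ)) ↔
      ∃ i, ∀ j, U j ≤ U i → Finite (↥(U i) ⧸ (U j).subgroupOf (U i))) := by
  intro φ
  haveI : ∀ i, DiscreteTopology (N ⧸ U i) := fun i => ⟨rfl⟩
  haveI : ∀ i, IsTopologicalGroup (N ⧸ U i) := fun i => by constructor
  have hφ : ∀ (n : N) (i : ι), φ n i = QuotientGroup.mk n := fun n i => rfl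
  constructor
  · -- forward
    intro hLC
    have h1 : (1 : ∀ i, N ⧸ U i) ∈ closure (Set.range φ) :=
      subset_closure ⟨1, map_one φ⟩
    set pt : ↥(closure (Set.range φ)) := ⟨1, h1⟩ with hpt
    obtain ⟨K, hKnhds, _, hKcomp⟩ := hLC.local_compact_nhds pt Set.univ Filter.univ_mem
    -- extract a basic neighborhood
    rw [mem_nhds_subtype] at hKnhds
    obtain ⟨V, hV, hVK⟩ := hKnhds
    rw [nhds_pi] at hV
    rw [Filter.mem_pi] at hV
    obtain ⟨F, hFfin, t, ht, htV⟩ := hV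
    obtain ⟨i, hi⟩ := exists_lb U hdir F hFfin
    refine ⟨i, fun j hj => ?_⟩
    -- the image of K under projection j is finite
    have hSj : Set.Finite ((fun y : ∀ i, N ⧸ U i => y j) '' (Subtype.val '' K)) := by
      refine IsCompact.finite_of_discrete ?_
      exact (hKcomp.image continuous_subtype_val).image (continuous_apply j)
    -- every u in U i maps into that image
    have key : ∀ u : ↥(U i), (QuotientGroup.mk (u : N) : N ⧸ U j) ∈
        ((fun y : ∀ i, N ⧸ U i => y j) '' (Subtype.val '' K)) := by
      intro u
      have hmem : φ (u : N) ∈ closure (Set.range φ) := subset_closure ⟨u, rfl⟩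
      have hx : (⟨φ (u : N), hmem⟩ : ↥(closure (Set.range φ))) ∈ K := by
        apply hVK
        show φ (u : N) ∈ V
        apply htV
        intro s hs
        have h2 : (φ (u : N)) s = 1 := by
          have hus : (u : N) ∈ U s := hi s hs u.2
          simpa [hφ, QuotientGroup.eq_one_iff] using hus
        exact h2 ▸ mem_of_mem_nhds (ht s)
      exact ⟨φ (u : N), ⟨⟨φ (u : N), hmem⟩, hx, rfl⟩, (hφ u j).symm ▸ rfl⟩
    -- build injection from the quotient
    set Sj := ((fun y : ∀ i, N ⧸ U i => y j) '' (Subtype.val '' K)) with hSjdef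
    haveI : Finite ↥Sj := hSj.to_subtype
    have hle : (U j).subgroupOf (U i) ≤ ((U j).comap (U i).subtype) := le_rfl
    let f : (↥(U i) ⧸ (U j).subgroupOf (U i)) → N ⧸ U j :=
      QuotientGroup.map _ _ (U i).subtype hle
    have hfmk : ∀ u : ↥(U i), f (QuotientGroup.mk u) = QuotientGroup.mk (u : N) :=
      fun u => rfl
    have hfS : ∀ q, f q ∈ Sj := by
      intro q
      induction q using Quotient.inductionOn with
      | h u => exact hfmk u ▸ key u
    have hfinj : Function.Injective f := by
      intro a b hab
      induction a using Quotient.inductionOn with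
      | h u =>
      induction b using Quotient.inductionOn with
      | h v =>
      rw [hfmk, hfmk] at hab
      rw [QuotientGroup.eq] at hab ⊢
      exact hab
    exact Finite.of_injective (fun q => (⟨f q, hfS q⟩ : ↥Sj))
      (fun a b hab => hfinj (congrArg Subtype.val hab))
  · -- backward
    rintro ⟨i, hi⟩
    set H : Subgroup (∀ i, N ⧸ U i) := (MonoidHom.range φ).topologicalClosure with hH
    show LocallyCompactSpace ↥H
    -- finite sets bounding the coordinates
    have hT : ∀ j : ι, Set.Finite ((QuotientGroup.mk : N → N ⧸ U j) '' ↑(U i)) := by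
      intro j
      obtain ⟨k, hk⟩ := hdir i j
      haveI hfin : Finite (↥(U i) ⧸ (U k).subgroupOf (U i)) := hi k (hk.trans inf_le_left)
      have hle : (U k).subgroupOf (U i) ≤ ((U j).comap (U i).subtype) := by
        intro x hx
        exact (hk.trans inf_le_right) hx
      let g : (↥(U i) ⧸ (U k).subgroupOf (U i)) → N ⧸ U j :=
        QuotientGroup.map _ _ (U i).subtype hle
      refine (Set.finite_range g).subset ?_
      rintro _ ⟨n, hn, rfl⟩
      exact ⟨QuotientGroup.mk (⟨n, hn⟩ : ↥(U i)), rfl⟩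
    -- the compact open subgroup-like neighborhood
    set S : Set (∀ i, N ⧸ U i) :=
      closure (Set.range φ) ∩ {y | y i = 1} with hS
    have hSsub : S ⊆ Set.pi Set.univ
        (fun j => (QuotientGroup.mk : N → N ⧸ U j) '' ↑(U i)) := by
      rintro y ⟨hy1, hy2⟩ j _
      set W : Set (∀ i, N ⧸ U i) :=
        ((fun z : ∀ i, N ⧸ U i => z i) ⁻¹' {y i}) ∩
          ((fun z : ∀ i, N ⧸ U i => z j) ⁻¹' {y j}) with hW
      have hop : IsOpen W := by
        refine IsOpen.inter ?_ ?_
        · exact (isOpen_discrete ({y i} : Set (N ⧸ U i))).preimage (continuous_apply i)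
        · exact (isOpen_discrete ({y j} : Set (N ⧸ U j))).preimage (continuous_apply j)
      have hmem : y ∈ W := ⟨rfl, rfl⟩
      obtain ⟨z, ⟨hzi', hzj'⟩, n, rfl⟩ :=
        _root_.mem_closure_iff.1 hy1 _ hop hmem
      have hzi : φ n i = y i := hzi'
      have hzj : φ n j = y j := hzj'
      have hn : n ∈ U i := by
        refine (QuotientGroup.eq_one_iff n).1 ?_
        exact (hφ n i) ▸ (hzi.trans hy2)
      exact ⟨n, hn, ((hφ n j).symm ▸ hzj).symm ▸ rfl⟩
    have hpc : IsCompact (Set.univ.pi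
        fun j => (QuotientGroup.mk : N → N ⧸ U j) '' ↑(U i)) :=
      isCompact_univ_pi fun j => (hT j).isCompact
    have hcl : IsClosed S := by
      refine isClosed_closure.inter ?_
      have : IsClosed ((fun z : ∀ i, N ⧸ U i => z i) ⁻¹' {(1 : N ⧸ U i)}) :=
        (isClosed_discrete ({(1 : N ⧸ U i)} : Set (N ⧸ U i))).preimage (continuous_apply i)
      exact this
    have hScomp : IsCompact S := hpc.of_isClosed_subset hcl hSsub
    -- transfer to the subtype
    set K : Set ↥H := {x | (x : ∀ i, N ⧸ U i) i = 1} with hK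
    have hKcomp : IsCompact K := by
      rw [Subtype.isCompact_iff]
      have : Subtype.val '' K = S := by
        ext y
        constructor
        · rintro ⟨x, hx, rfl⟩
          exact ⟨x.2, hx⟩
        · rintro ⟨hy1, hy2⟩
          exact ⟨⟨y, hy1⟩, hy2, rfl⟩
      rw [this]
      exact hScomp
    have hKnhds : K ∈ nhds (1 : ↥H) := by
      have : IsOpen K := by
        have : Continuous (fun x : ↥H => (x : ∀ i, N ⧸ U i) i) :=
          (continuous_apply i).comp continuous_subtype_val
        exact this.isOpen_preimage {(1 : N ⧸ U i)} (isOpen_discrete _)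
      exact this.mem_nhds rfl
    exact hKcomp.locallyCompactSpace_of_mem_nhds_of_group hKnhds
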